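/- Leaf-join correctness: Let P' be a pattern with rightmost vertex u, v a single-vertex pattern, and P = RExtend(P', v, u). Then the map sending an embedding φ of P into database tree T to the pair (φ restricted to V(P'), φ(v)) is a bijection between embeddings of P into T and pairs (φ', x) where φ' is an embedding of P' into T, x is a vertex of T with label λ(v), p(φ'(u)) < p(x), and x.scope.u ≤ φ'(u).scope.u (i.e., x is a descendant of φ'(u)). -/

import Mathlib

open scoped Classical

/-- A rooted tree on vertices `Fin (n+1)`, given by its parent function.
The preorder numbering is the identity (this is imposed by `IsValid`). -/
structure PTree (n : ℕ) where
  parent : Fin (n + 1) → Fin (n + 1)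

namespace PTree

variable {n : ℕ}

/-- `t.Anc u v` : `u` is a proper ancestor of `v`. -/
def Anc (t : PTree n) : Fin (n + 1) → Fin (n + 1) → Prop :=
  Relation.TransGen (fun a b => a = t.parent b ∧ a ≠ b)

/-- The set of descendants of `v`, including `v` itself (the subtree rooted at `v`). -/
noncomputable def descSet (t : PTree n) (v : Fin (n + 1)) : Finset (Fin (n + 1)) :=
  Finset.univ.filter fun w => w = v ∨ t.Anc v w

/-- The number of vertices in the subtree rooted at `v`. -/
noncomputable def size (t : PTree n) (v : Fin (n + 1)) : ℕ := (t.descSet v).card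

/-- The preorder number of the rightmost (last in preorder) descendant of `v`. -/
noncomputable def scopeU (t : PTree n) (v : Fin (n + 1)) : ℕ :=
  (t.descSet v).sup fun w => (w : ℕ)

/-- The scope of a vertex: lower bound is its preorder number, upper bound the
preorder number of its rightmost descendant. -/
noncomputable def scope (t : PTree n) (v : Fin (n + 1)) : ℕ × ℕ :=
  ((v : ℕ), t.scopeU v)

/-- `t` is a rooted tree whose preorder numbering is the identity:
vertex `0` is the root, parents come strictly earlier, and the parent of the
next vertex in preorder is the previous vertex or one of its ancestors. -/
def IsValid (t : PTree n) : Prop :=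
  t.parent 0 = 0 ∧
  (∀ v : Fin (n + 1), v ≠ 0 → t.parent v < v) ∧
  (∀ (v : Fin (n + 1)) (h : (v : ℕ) + 1 < n + 1),
    t.parent ⟨(v : ℕ) + 1, h⟩ = v ∨ t.Anc (t.parent ⟨(v : ℕ) + 1, h⟩) v)

/-- `v` lies on the rightmost path of `t` (the path from the root to the last
vertex in preorder). -/
def OnRMP (t : PTree n) (v : Fin (n + 1)) : Prop :=
  v = Fin.last n ∨ t.Anc v (Fin.last n)

/-- Rightmost path extension: attach a new vertex (the new last vertex in
preorder) as the rightmost child of `u`. -/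
def extendP (t : PTree n) (u : Fin (n + 1)) : PTree (n + 1) where
  parent v := if h : (v : ℕ) < n + 1 then (t.parent ⟨(v : ℕ), h⟩).castSucc else u.castSucc

end PTree

/-- A rooted ordered labeled tree. -/
structure LTree (n : ℕ) extends PTree n where
  label : Fin (n + 1) → ℕ

namespace LTree

variable {m n : ℕ}

def IsValid (t : LTree n) : Prop := t.toPTree.IsValid

/-- Subtree homeomorphism (embedding) of a pattern `P` into a database tree `T`:
injective, preorder-order preserving (preorder numbers being the identity),
label preserving, and mapping each edge to an ancestor-descendant pair. -/
def IsEmb (P : LTree m) (T : LTree n) (φ : Fin (m + 1) → Fin (n + 1)) : Prop :=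
  StrictMono φ ∧ (∀ v, T.label (φ v) = P.label v) ∧
  (∀ v : Fin (m + 1), v ≠ 0 → T.toPTree.Anc (φ (P.parent v)) (φ v))

/-- Rightmost path extension of a labeled tree: the new vertex gets label `a`. -/
def extendL (t : LTree m) (u : Fin (m + 1)) (a : ℕ) : LTree (m + 1) where
  toPTree := t.toPTree.extendP u
  label v := if h : (v : ℕ) < m + 1 then t.label ⟨(v : ℕ), h⟩ else a

end LTree

/-- Extension of an embedding: the new (last) pattern vertex is mapped to `x`. -/
def extendMap {m n : ℕ} (φ : Fin (m + 1) → Fin (n + 1)) (x : Fin (n + 1)) :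
    Fin (m + 2) → Fin (n + 1) :=
  fun v => if h : (v : ℕ) < m + 1 then φ ⟨(v : ℕ), h⟩ else x

/-- `RExtend(OT', x, y)` (with `y = φ' u`) is an occurrence tree in `T`, i.e. the
extended map is an embedding of the rightmost path extension of `P'` (whose new
vertex carries the label of `x`). -/
def ExtIsOccTree {m n : ℕ} (P' : LTree m) (T : LTree n)
    (φ' : Fin (m + 1) → Fin (n + 1)) (u : Fin (m + 1)) (x : Fin (n + 1)) : Prop :=
  LTree.IsEmb (P'.extendL u (T.label x)) T (extendMap φ' x)

namespace PTree

variable {n : ℕ} {t : PTree n}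

lemma parent_le (ht : t.IsValid) (v : Fin (n + 1)) : t.parent v ≤ v := by
  rcases eq_or_ne v 0 with h | h
  · subst h; exact le_of_eq ht.1
  · exact le_of_lt (ht.2.1 v h)

lemma anc_lt (ht : t.IsValid) {a b : Fin (n + 1)} (h : t.Anc a b) : a < b := by
  induction h with
  | single h =>
    rcases h with ⟨h1, h2⟩
    exact lt_of_le_of_ne (h1 ▸ parent_le ht _) h2
  | tail _ h ih =>
    rcases h with ⟨h1, h2⟩
    exact lt_of_lt_of_le ih (le_of_lt (lt_of_le_of_ne (h1 ▸ parent_le ht _) h2))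

lemma iterate_le (ht : t.IsValid) (k : ℕ) : ∀ v : Fin (n + 1), t.parent^[k] v ≤ v := by
  induction k with
  | zero => intro v; simp
  | succ k ih =>
    intro v
    rw [Function.iterate_succ_apply]
    exact le_trans (ih (t.parent v)) (parent_le ht v)

lemma anc_of_iterate (ht : t.IsValid) {a : Fin (n + 1)} (k : ℕ) :
    ∀ b : Fin (n + 1), t.parent^[k] b = a → a < b → t.Anc a b := by
  induction k with
  | zero => intro b hk hab; simp at hk; exact absurd hk (ne_of_gt hab)
  | succ k ih =>
    intro b hk hab
    rw [Function.iterate_succ_apply] at hk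
    by_cases hpb : t.parent b = b
    · rw [hpb] at hk; exact ih b hk hab
    · have step : t.Anc (t.parent b) b := Relation.TransGen.single ⟨rfl, hpb⟩
      have hle : a ≤ t.parent b := hk ▸ iterate_le ht k (t.parent b)
      rcases eq_or_lt_of_le hle with h | h
      · rw [h]; exact step
      · exact Relation.TransGen.trans (ih (t.parent b) hk h) step

lemma anc_iterate {a b : Fin (n + 1)} (h : t.Anc a b) :
    ∃ k, 0 < k ∧ t.parent^[k] b = a := by
  induction h with
  | single h => exact ⟨1, one_pos, by simp [h.1.symm]⟩
  | tail _ hbc ih =>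
    rcases ih with ⟨k, hk, hik⟩
    refine ⟨k + 1, Nat.succ_pos _, ?_⟩
    rw [Function.iterate_succ_apply, ← hbc.1]
    exact hik

lemma anc_chain (ht : t.IsValid) {a c b : Fin (n + 1)} (hab : t.Anc a b)
    (hcb : t.Anc c b) (hac : a < c) : t.Anc a c := by
  obtain ⟨j, hj, hja⟩ := anc_iterate hab
  obtain ⟨k, hk, hkc⟩ := anc_iterate hcb
  have hjk : k < j := by
    by_contra h
    push_neg at h
    have hle : t.parent^[k] b ≤ t.parent^[j] b := by
      rw [show k = (k - j) + j by omega, Function.iterate_add_apply]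
      exact iterate_le ht _ _
    rw [hja, hkc] at hle
    exact absurd hac (not_lt.2 hle)
  have key : t.parent^[j - k] c = a := by
    rw [← hkc, ← Function.iterate_add_apply, show j - k + k = j by omega]
    exact hja
  exact anc_of_iterate ht _ _ key hac

lemma anc_parent_le (ht : t.IsValid) {y w : Fin (n + 1)} (h : t.Anc y w) :
    y ≤ t.parent w := by
  obtain ⟨k, hk, hik⟩ := anc_iterate h
  obtain ⟨k', rfl⟩ := Nat.exists_eq_succ_of_ne_zero (Nat.pos_iff_ne_zero.mp hk)
  rw [Function.iterate_succ_apply] at hik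
  exact hik ▸ iterate_le ht _ _

/-- One step of downward closure: the vertex just before an ancestor's
descendant is still in the subtree. -/
lemma desc_pred (ht : t.IsValid) {y w w' : Fin (n + 1)} (hyw : t.Anc y w)
    (hw' : (w' : ℕ) + 1 = (w : ℕ)) : y = w' ∨ t.Anc y w' := by
  have hwlt : (w' : ℕ) + 1 < n + 1 := hw' ▸ w.isLt
  have hweq : (⟨(w' : ℕ) + 1, hwlt⟩ : Fin (n + 1)) = w := Fin.ext hw'
  have h3 := ht.2.2 w' hwlt
  rw [hweq] at h3
  have hyp : y ≤ t.parent w := anc_parent_le ht hyw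
  have hpw : t.Anc (t.parent w) w := by
    refine Relation.TransGen.single ⟨rfl, ?_⟩
    intro h
    have h0 : w ≠ 0 := by
      intro h0
      have := anc_lt ht hyw
      rw [h0] at this
      exact absurd this (by simp [Fin.lt_def])
    exact absurd h (ne_of_lt (ht.2.1 w h0))
  rcases h3 with h3 | h3
  · rcases eq_or_lt_of_le hyp with h | h
    · left; rw [h, h3]
    · right; rw [← h3]; exact anc_chain ht hyw hpw h
  · rcases eq_or_lt_of_le hyp with h | h
    · right; rw [h]; exact h3
    · right; exact Relation.TransGen.trans (anc_chain ht hyw hpw h) h3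

/-- Downward closure of subtrees: anything between `y` and a descendant of `y`
is a descendant of `y`. -/
lemma desc_interval (ht : t.IsValid) {y x w : Fin (n + 1)}
    (hw : y = w ∨ t.Anc y w) (hyx : y ≤ x) (hxw : x ≤ w) : y = x ∨ t.Anc y x := by
  obtain ⟨d, hd⟩ : ∃ d, (w : ℕ) - (x : ℕ) = d := ⟨_, rfl⟩
  induction d generalizing w with
  | zero =>
    have : x = w := Fin.ext (by omega)
    exact this ▸ hw
  | succ d ih =>
    have hxw' : (x : ℕ) < (w : ℕ) := by omega
    have hyw : t.Anc y w := by
      rcases hw with h | h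
      · exfalso; rw [← h] at hxw'; exact absurd hyx (not_le.2 hxw')
      · exact h
    have hw1lt : (w : ℕ) - 1 < n + 1 := by omega
    set w' : Fin (n + 1) := ⟨(w : ℕ) - 1, hw1lt⟩ with hw'def
    have harg1 : (w' : ℕ) + 1 = (w : ℕ) := by
      show (w : ℕ) - 1 + 1 = (w : ℕ); omega
    have hstep := desc_pred ht hyw harg1
    have hxw'2 : x ≤ w' := by rw [Fin.le_def]; show (x : ℕ) ≤ (w : ℕ) - 1; omega
    have hd2 : (w' : ℕ) - (x : ℕ) = d := by show (w : ℕ) - 1 - (x : ℕ) = d; omega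
    exact ih hstep hxw'2 hd2

lemma mem_descSet {y x : Fin (n + 1)} : x ∈ t.descSet y ↔ x = y ∨ t.Anc y x := by
  simp [descSet]

lemma le_scopeU_self (y : Fin (n + 1)) : (y : ℕ) ≤ t.scopeU y :=
  Finset.le_sup (mem_descSet.mpr (Or.inl rfl))

lemma scopeU_mono (h : t.Anc y x) : t.scopeU x ≤ t.scopeU y := by
  refine Finset.sup_mono ?_
  intro w hw
  rcases mem_descSet.mp hw with h' | h'
  · exact mem_descSet.mpr (Or.inr (h' ▸ h))
  · exact mem_descSet.mpr (Or.inr (Relation.TransGen.trans h h'))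

lemma anc_iff_scope (ht : t.IsValid) {y x : Fin (n + 1)} :
    t.Anc y x ↔ (y : ℕ) < (x : ℕ) ∧ t.scopeU x ≤ t.scopeU y := by
  constructor
  · intro h
    exact ⟨anc_lt ht h, scopeU_mono h⟩
  · rintro ⟨hlt, hsc⟩
    obtain ⟨w, hwmem, hwsup⟩ :=
      Finset.exists_mem_eq_sup (t.descSet y) ⟨y, mem_descSet.mpr (Or.inl rfl)⟩
        (fun w => (w : ℕ))
    have hxw : (x : ℕ) ≤ (w : ℕ) := by
      have h1 : (x : ℕ) ≤ t.scopeU x := le_scopeU_self x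
      have h2 : t.scopeU y = (w : ℕ) := hwsup
      omega
    have hw : y = w ∨ t.Anc y w := by
      rcases mem_descSet.mp hwmem with h | h
      · exact Or.inl h.symm
      · exact Or.inr h
    rcases desc_interval ht hw (le_of_lt (Fin.lt_def.mpr hlt)) (Fin.le_def.mpr hxw) with h | h
    · exact absurd (congrArg Fin.val h) (by omega)
    · exact h

end PTree

/-- Leaf-join correctness (Proposition 5 at the level of embeddings): for
`P = RExtend(P', v, u)` with `u` the rightmost vertex of `P'` and `v` a new
vertex labeled `a`, the map `φ ↦ (φ|V(P'), φ(v))` is a bijection between the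
embeddings of `P` into `T` and the pairs `(φ', x)` where `φ'` embeds `P'` into
`T`, `x` has label `a`, `p(φ'(u)) < p(x)`, and `x.scope.u ≤ φ'(u).scope.u`
(i.e. `x` is a descendant of `φ'(u)`). -/
theorem stmt18 {m n : ℕ} (P' : LTree m) (T : LTree n) (hP : P'.IsValid)
    (hT : T.IsValid) (a : ℕ) :
    Set.BijOn
      (fun φ : Fin (m + 2) → Fin (n + 1) =>
        ((fun w : Fin (m + 1) => φ w.castSucc), φ (Fin.last (m + 1))))
      {φ | LTree.IsEmb (P'.extendL (Fin.last m) a) T φ}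
      {p : (Fin (m + 1) → Fin (n + 1)) × Fin (n + 1) |
        LTree.IsEmb P' T p.1 ∧ T.label p.2 = a ∧
        (p.1 (Fin.last m) : ℕ) < (p.2 : ℕ) ∧
        T.toPTree.scopeU p.2 ≤ T.toPTree.scopeU (p.1 (Fin.last m))} := by
  have hTv : T.toPTree.IsValid := hT
  refine ⟨?_, ?_, ?_⟩
  · -- MapsTo
    rintro φ ⟨hmono, hlab, hanc⟩
    have hA : T.toPTree.Anc (φ ((Fin.last m).castSucc)) (φ (Fin.last (m + 1))) := by
      have hv : (Fin.last (m + 1)) ≠ (0 : Fin (m + 2)) := by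
        simp [Fin.ext_iff]
      have := hanc (Fin.last (m + 1)) hv
      have hpar : (P'.extendL (Fin.last m) a).parent (Fin.last (m + 1)) =
          (Fin.last m).castSucc := by
        simp [LTree.extendL, PTree.extendP]
      rwa [hpar] at this
    refine ⟨⟨?_, ?_, ?_⟩, ?_, ?_, ?_⟩
    · intro v1 v2 h
      exact hmono (Fin.castSucc_lt_castSucc_iff.mpr h)
    · intro v
      have := hlab v.castSucc
      simpa [LTree.extendL, v.isLt, v.is_le] using this
    · intro v hv
      have hv' : v.castSucc ≠ (0 : Fin (m + 2)) := by
        intro h0; apply hv; apply Fin.ext; have := congrArg Fin.val h0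
        simp only [Fin.coe_castSucc, Fin.val_zero] at this ⊢; exact this
      have := hanc v.castSucc hv'
      have hpar : (P'.extendL (Fin.last m) a).parent v.castSucc =
          (P'.parent v).castSucc := by
        simp [LTree.extendL, PTree.extendP, v.isLt, not_lt.mpr v.is_le]
      rwa [hpar] at this
    · have := hlab (Fin.last (m + 1))
      simpa [LTree.extendL] using this
    · exact PTree.anc_lt hTv hA
    · exact PTree.scopeU_mono hA
  · -- InjOn
    rintro φ1 _ φ2 _ heq
    simp only [Prod.mk.injEq] at heq
    funext v
    refine Fin.lastCases ?_ ?_ v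
    · exact heq.2
    · intro w
      exact congrFun heq.1 w
  · -- SurjOn
    rintro ⟨φ', x⟩ ⟨⟨hmono', hlab', hanc'⟩, hlabx, hlt, hscope⟩
    have hA : T.toPTree.Anc (φ' (Fin.last m)) x :=
      (PTree.anc_iff_scope hTv).mpr ⟨hlt, hscope⟩
    refine ⟨extendMap φ' x, ?_, ?_⟩
    · refine ⟨?_, ?_, ?_⟩
      · -- StrictMono
        intro v1 v2 h12
        have h12' : (v1 : ℕ) < (v2 : ℕ) := h12
        simp only [extendMap]
        by_cases h2 : (v2 : ℕ) < m + 1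
        · have h1 : (v1 : ℕ) < m + 1 := by omega
          rw [dif_pos h1, dif_pos h2]
          exact hmono' (show (⟨(v1 : ℕ), h1⟩ : Fin (m + 1)) < ⟨(v2 : ℕ), h2⟩ from h12')
        · rw [dif_neg h2]
          by_cases h1 : (v1 : ℕ) < m + 1
          · rw [dif_pos h1]
            exact lt_of_le_of_lt (hmono'.monotone (Fin.le_last _)) (PTree.anc_lt hTv hA)
          · exfalso
            have := v2.isLt
            omega
      · -- labels
        intro v
        simp only [extendMap, LTree.extendL]
        by_cases h : (v : ℕ) < m + 1
        · rw [dif_pos h, dif_pos h]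
          exact hlab' _
        · rw [dif_neg h, dif_neg h]
          exact hlabx
      · -- ancestry
        intro v hv
        by_cases h : (v : ℕ) < m + 1
        · have hpar : (P'.extendL (Fin.last m) a).parent v =
              (P'.parent ⟨(v : ℕ), h⟩).castSucc := by
            simp [LTree.extendL, PTree.extendP, h, show (v : ℕ) ≤ m by omega]
          rw [hpar]
          have h1 : (extendMap φ' x) ((P'.parent ⟨(v : ℕ), h⟩).castSucc) =
              φ' (P'.parent ⟨(v : ℕ), h⟩) := by
            simp [extendMap, not_lt.mpr (P'.parent ⟨(v : ℕ), h⟩).is_le]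
          have h2 : (extendMap φ' x) v = φ' ⟨(v : ℕ), h⟩ := by
            simp [extendMap, h]
          rw [h1, h2]
          refine hanc' _ ?_
          intro h0; apply hv; apply Fin.ext; have := congrArg Fin.val h0
          simp only [Fin.val_zero] at this ⊢; exact this
        · have hveq : v = Fin.last (m + 1) := by
            have := v.isLt
            exact Fin.ext (by simp; omega)
          subst hveq
          have hpar : (P'.extendL (Fin.last m) a).parent (Fin.last (m + 1)) =
              (Fin.last m).castSucc := by
            simp [LTree.extendL, PTree.extendP]
          rw [hpar]
          have h1 : (extendMap φ' x) ((Fin.last m).castSucc) = φ' (Fin.last m) := by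
            simp [extendMap, Fin.last]
          have h2 : (extendMap φ' x) (Fin.last (m + 1)) = x := by
            simp [extendMap]
          rw [h1, h2]
          exact hA
    · -- image is the pair
      simp only [Prod.mk.injEq]
      constructor
      · funext w
        simp [extendMap, not_lt.mpr w.is_le]
      · simp [extendMap]
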